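/- Let p : (0,∞) → ℝ be differentiable with (5/3)·p(Z) − Z·p′(Z) > 0 for every Z > 0 and p(Z)/Z^{5/3} → p_∞ > 0 as Z → ∞, and let a > 0. Define the total internal energy density ρ·e(ρ,θ) := (3/2)·θ^{5/2}·p(ρ θ^{−3/2}) + a·θ⁴ for ρ, θ > 0. Then with c := min((3/2)p_∞, a) > 0 one has ρ·e(ρ,θ) ≥ c·(ρ^{5/3} + θ⁴) for all ρ, θ > 0. -/

import Mathlib

/-- with `p` differentiable, `(5/3)p − Z p′ > 0`, `p(Z)/Z^(5/3) → p_∞ > 0`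
and `a > 0`, the total internal energy density
`ρ·e(ρ,θ) = (3/2)·θ^(5/2)·p(ρ θ^(−3/2)) + a·θ⁴` satisfies the coercivity bound
`ρ·e(ρ,θ) ≥ min((3/2)p_∞, a)·(ρ^(5/3) + θ⁴)` for all `ρ, θ > 0`. -/
theorem internal_energy_coercive (p p' : ℝ → ℝ) (pinf a : ℝ)
    (hderiv : ∀ Z : ℝ, 0 < Z → HasDerivAt p (p' Z) Z)
    (hstab : ∀ Z : ℝ, 0 < Z → 0 < (5 / 3) * p Z - Z * p' Z)
    (hlim : Filter.Tendsto (fun Z : ℝ => p Z / Z ^ ((5 : ℝ) / 3)) Filter.atTop (nhds pinf))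
    (hpinf : 0 < pinf) (ha : 0 < a) :
    ∀ ρ θ : ℝ, 0 < ρ → 0 < θ →
      min ((3 / 2) * pinf) a * (ρ ^ ((5 : ℝ) / 3) + θ ^ 4) ≤
        (3 / 2) * θ ^ ((5 : ℝ) / 2) * p (ρ * θ ^ (-(3 : ℝ) / 2)) + a * θ ^ 4 := by
  intro ρ θ hρ hθ
  set g : ℝ → ℝ := fun Z => p Z * Z ^ (-((5 : ℝ) / 3)) with hg
  have hgd : ∀ Z : ℝ, 0 < Z →
      HasDerivAt g (Z ^ (-((8 : ℝ) / 3)) * (Z * p' Z - (5 / 3) * p Z)) Z := by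
    intro Z hZ
    have h1 := (hderiv Z hZ).mul
      (Real.hasDerivAt_rpow_const (x := Z) (p := -((5 : ℝ) / 3)) (Or.inl hZ.ne'))
    convert h1 using 1
    · rfl
    · rfl
    · rfl
    have e1 : Z ^ (-((5 : ℝ) / 3)) = Z * Z ^ (-((8 : ℝ) / 3)) := by
      rw [show (-((5 : ℝ) / 3)) = 1 + (-((8 : ℝ) / 3)) by norm_num, Real.rpow_add hZ,
        Real.rpow_one]
    rw [show (-((5 : ℝ) / 3) - 1) = -((8 : ℝ) / 3) by norm_num, e1]
    ring
  have hanti : StrictAntiOn g (Set.Ioi 0) := by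
    apply strictAntiOn_of_deriv_neg (convex_Ioi 0)
    · exact fun Z hZ => ((hgd Z hZ).continuousAt).continuousWithinAt
    · intro Z hZ
      rw [interior_Ioi] at hZ
      rw [(hgd Z hZ).deriv]
      have h2 := hstab Z hZ
      have h3 : 0 < Z ^ (-((8 : ℝ) / 3)) := Real.rpow_pos_of_pos hZ _
      nlinarith
  have hlb : ∀ Z : ℝ, 0 < Z → pinf * Z ^ ((5 : ℝ) / 3) ≤ p Z := by
    intro Z hZ
    have hge : pinf ≤ g Z := by
      by_contra h
      push_neg at h
      have hev : ∀ᶠ W in Filter.atTop, p W / W ^ ((5 : ℝ) / 3) ≤ g Z := by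
        filter_upwards [Filter.eventually_gt_atTop Z, Filter.eventually_gt_atTop 0] with W hW hW0
        have heq : p W / W ^ ((5 : ℝ) / 3) = g W := by
          rw [hg]
          simp only
          rw [div_eq_mul_inv, ← Real.rpow_neg hW0.le]
        rw [heq]
        exact (hanti (Set.mem_Ioi.mpr hZ) (Set.mem_Ioi.mpr hW0) hW).le
      exact absurd (le_of_tendsto hlim hev) (not_le.mpr h)
    have h5 : 0 < Z ^ ((5 : ℝ) / 3) := Real.rpow_pos_of_pos hZ _
    have heq2 : g Z * Z ^ ((5 : ℝ) / 3) = p Z := by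
      rw [hg]
      simp only
      rw [mul_assoc, ← Real.rpow_add hZ]
      norm_num
    nlinarith
  have hθ32 : 0 < θ ^ (-(3 : ℝ) / 2) := Real.rpow_pos_of_pos hθ _
  have hZpos : 0 < ρ * θ ^ (-(3 : ℝ) / 2) := mul_pos hρ hθ32
  have hcalc : θ ^ ((5 : ℝ) / 2) * (ρ * θ ^ (-(3 : ℝ) / 2)) ^ ((5 : ℝ) / 3)
      = ρ ^ ((5 : ℝ) / 3) := by
    rw [Real.mul_rpow hρ.le hθ32.le]
    rw [← Real.rpow_mul hθ.le]
    rw [show (-(3 : ℝ) / 2 * (5 / 3)) = -((5 : ℝ) / 2) by norm_num]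
    rw [mul_comm (ρ ^ ((5 : ℝ) / 3)) _, ← mul_assoc, ← Real.rpow_add hθ]
    norm_num
  have hθ52 : 0 < θ ^ ((5 : ℝ) / 2) := Real.rpow_pos_of_pos hθ _
  have key : (3 / 2) * pinf * ρ ^ ((5 : ℝ) / 3)
      ≤ (3 / 2) * θ ^ ((5 : ℝ) / 2) * p (ρ * θ ^ (-(3 : ℝ) / 2)) := by
    have h1 := hlb _ hZpos
    have h2 : (3 / 2) * θ ^ ((5 : ℝ) / 2) * (pinf * (ρ * θ ^ (-(3 : ℝ) / 2)) ^ ((5 : ℝ) / 3))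
        = (3 / 2) * pinf * ρ ^ ((5 : ℝ) / 3) := by
      rw [← hcalc]; ring
    nlinarith
  have hmin1 : min ((3 / 2) * pinf) a ≤ (3 / 2) * pinf := min_le_left _ _
  have hmin2 : min ((3 / 2) * pinf) a ≤ a := min_le_right _ _
  have hρ5 : 0 < ρ ^ ((5 : ℝ) / 3) := Real.rpow_pos_of_pos hρ _
  have hθ4 : 0 < θ ^ 4 := pow_pos hθ 4
  nlinarith
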